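/- Let d ≥ 1, T > 0, Σ ∈ M_d(ℝ), ϑ ∈ M_d(ℝ), and let H : [0, T] → M_d(ℝ) be continuous. Let Ψ, V : [0, T] → M_d(ℝ) be differentiable with Ψ′(t) = −H(t)ᵀ Ψ(t), V′(t) = −Ψ(t)ᵀ Σᵀ Σ Ψ(t) for all t ∈ [0, T], Ψ(T) = I_d, and V(T) = 0. Suppose that I_d + 2V(t)ϑ is invertible for every t ∈ [0, T]. Then the function ψ̂(t) = Ψ(t) ϑ (I_d + 2V(t)ϑ)^{−1} Ψ(t)ᵀ satisfies ψ̂(T) = ϑ and, for every t ∈ [0, T], ψ̂ is differentiable at t with ψ̂′(t) = 2 ψ̂(t) Σᵀ Σ ψ̂(t) − H(t)ᵀ ψ̂(t) − ψ̂(t) H(t). -/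

import Mathlib

open Matrix

variable {d : ℕ}

lemma matMulDeriv {A B : ℝ → Matrix (Fin d) (Fin d) ℝ} {A' B' : Matrix (Fin d) (Fin d) ℝ} {t : ℝ}
    (hA : ∀ i j, HasDerivAt (fun s => A s i j) (A' i j) t)
    (hB : ∀ i j, HasDerivAt (fun s => B s i j) (B' i j) t) :
    ∀ i j, HasDerivAt (fun s => (A s * B s) i j) ((A' * B t + A t * B') i j) t := by
  intro i j
  have h : HasDerivAt (fun s => ∑ k, A s i k * B s k j)
      (∑ k, (A' i k * B t k j + A t i k * B' k j)) t :=
    HasDerivAt.fun_sum fun k _ => (hA i k).mul (hB k j)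
  simpa [Matrix.mul_apply, Matrix.add_apply, Finset.sum_add_distrib] using h

lemma detDiff {M : ℝ → Matrix (Fin d) (Fin d) ℝ} {t : ℝ}
    (hM : ∀ i j, DifferentiableAt ℝ (fun s => M s i j) t) :
    DifferentiableAt ℝ (fun s => (M s).det) t := by
  have : ∀ s, (M s).det = ∑ σ : Equiv.Perm (Fin d),
      ((Equiv.Perm.sign σ : ℤ) : ℝ) * ∏ i, M s (σ i) i := by
    intro s; rw [Matrix.det_apply]; congr 1; ext σ; simp [Units.smul_def, zsmul_eq_mul]
  simp only [this]
  apply DifferentiableAt.fun_sum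
  intro σ _
  exact (DifferentiableAt.fun_finsetProd (u := Finset.univ) fun i _ => hM (σ i) i).const_mul _

lemma invDeriv {M : ℝ → Matrix (Fin d) (Fin d) ℝ} {M' : Matrix (Fin d) (Fin d) ℝ} {t : ℝ}
    (hM : ∀ i j, HasDerivAt (fun s => M s i j) (M' i j) t) (hu : IsUnit (M t)) :
    ∀ i j, HasDerivAt (fun s => (M s)⁻¹ i j) ((-((M t)⁻¹ * M' * (M t)⁻¹)) i j) t := by
  have hdet : DifferentiableAt ℝ (fun s => (M s).det) t :=
    detDiff fun i j => (hM i j).differentiableAt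
  have hdetu : IsUnit (M t).det := (Matrix.isUnit_iff_isUnit_det _).mp hu
  have hdetne : (M t).det ≠ 0 := hdetu.ne_zero
  have hadj : ∀ i j, DifferentiableAt ℝ (fun s => (M s).adjugate i j) t := by
    intro i j
    simp only [Matrix.adjugate_apply]
    apply detDiff
    intro a b
    simp only [Matrix.updateRow_apply]
    by_cases h : a = j
    · simp [h]
    · simpa [h] using (hM a b).differentiableAt
  have hNdiff : ∀ i j, DifferentiableAt ℝ (fun s => (M s)⁻¹ i j) t := by
    intro i j
    have : ∀ s, (M s)⁻¹ i j = ((M s).det)⁻¹ * (M s).adjugate i j := by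
      intro s; rw [Matrix.inv_def, Matrix.smul_apply, Ring.inverse_eq_inv', smul_eq_mul]
    simp only [this]
    exact (hdet.inv hdetne).mul (hadj i j)
  set N' : Matrix (Fin d) (Fin d) ℝ := fun i j => deriv (fun s => (M s)⁻¹ i j) t with hN'def
  have hN' : ∀ i j, HasDerivAt (fun s => (M s)⁻¹ i j) (N' i j) t := fun i j =>
    (hNdiff i j).hasDerivAt
  have hev : ∀ᶠ s in nhds t, M s * (M s)⁻¹ = 1 := by
    have hc : ContinuousAt (fun s => (M s).det) t := hdet.continuousAt
    filter_upwards [hc.eventually_ne hdetne] with s hs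
    exact Matrix.mul_nonsing_inv _ (isUnit_iff_ne_zero.mpr hs)
  have hzero : M' * (M t)⁻¹ + M t * N' = 0 := by
    ext i j
    have h1 := matMulDeriv hM hN' i j
    have h2 : HasDerivAt (fun _ : ℝ => (1 : Matrix (Fin d) (Fin d) ℝ) i j)
        ((M' * (M t)⁻¹ + M t * N') i j) t := by
      apply h1.congr_of_eventuallyEq
      filter_upwards [hev] with s hs
      rw [hs]
    have h3 := (hasDerivAt_const t ((1 : Matrix (Fin d) (Fin d) ℝ) i j)).unique h2
    simpa using h3.symm
  have hNeq : N' = -((M t)⁻¹ * M' * (M t)⁻¹) := by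
    have h4 : M t * N' = -(M' * (M t)⁻¹) := by
      rw [eq_neg_iff_add_eq_zero, add_comm]; exact hzero
    calc N' = (M t)⁻¹ * (M t * N') := by rw [← mul_assoc, Matrix.nonsing_inv_mul _ hdetu, one_mul]
    _ = -((M t)⁻¹ * M' * (M t)⁻¹) := by rw [h4, mul_assoc]; simp [mul_assoc]
  intro i j
  rw [← hNeq]
  exact hN' i j

theorem wishart_matrix_riccati_solution (d : ℕ) (hd : 1 ≤ d) (T : ℝ) (hT : 0 < T)
    (S ϑ : Matrix (Fin d) (Fin d) ℝ)
    (H : ℝ → Matrix (Fin d) (Fin d) ℝ)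
    (hH : ∀ i j : Fin d, ContinuousOn (fun t : ℝ => H t i j) (Set.Icc 0 T))
    (Ψ V : ℝ → Matrix (Fin d) (Fin d) ℝ)
    (hΨ' : ∀ t ∈ Set.Icc (0 : ℝ) T, ∀ i j : Fin d,
      HasDerivAt (fun s : ℝ => Ψ s i j) ((-((H t)ᵀ * Ψ t)) i j) t)
    (hV' : ∀ t ∈ Set.Icc (0 : ℝ) T, ∀ i j : Fin d,
      HasDerivAt (fun s : ℝ => V s i j) ((-((Ψ t)ᵀ * Sᵀ * S * Ψ t)) i j) t)
    (hΨT : Ψ T = 1) (hVT : V T = 0)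
    (hinv : ∀ t ∈ Set.Icc (0 : ℝ) T, IsUnit (1 + (2 : ℝ) • (V t * ϑ)))
    (ψh : ℝ → Matrix (Fin d) (Fin d) ℝ)
    (hψh : ∀ t : ℝ, ψh t = Ψ t * ϑ * (1 + (2 : ℝ) • (V t * ϑ))⁻¹ * (Ψ t)ᵀ) :
    ψh T = ϑ ∧
      ∀ t ∈ Set.Icc (0 : ℝ) T, ∀ i j : Fin d,
        HasDerivAt (fun s : ℝ => ψh s i j)
          (((2 : ℝ) • (ψh t * Sᵀ * S * ψh t) - (H t)ᵀ * ψh t - ψh t * H t) i j) t := by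
  constructor
  · rw [hψh T, hΨT, hVT]
    simp
  intro t ht i j
  -- notation
  set N : Matrix (Fin d) (Fin d) ℝ := (1 + (2 : ℝ) • (V t * ϑ))⁻¹ with hN
  have hϑ : ∀ i j : Fin d, HasDerivAt (fun _ : ℝ => ϑ i j)
      ((0 : Matrix (Fin d) (Fin d) ℝ) i j) t := by
    intro i j; simpa using hasDerivAt_const t (ϑ i j)
  have hVϑ := matMulDeriv (hV' t ht) hϑ
  set M' : Matrix (Fin d) (Fin d) ℝ := (2 : ℝ) • (-((Ψ t)ᵀ * Sᵀ * S * Ψ t) * ϑ) with hM'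
  have hMd : ∀ i j, HasDerivAt (fun s : ℝ => (1 + (2 : ℝ) • (V s * ϑ)) i j) (M' i j) t := by
    intro i j
    have h := ((hVϑ i j).const_mul (2 : ℝ)).const_add ((1 : Matrix (Fin d) (Fin d) ℝ) i j)
    rw [hM']
    simpa [Matrix.add_apply, Matrix.smul_apply, smul_eq_mul, mul_zero, add_zero] using h
  have hNd := invDeriv hMd (hinv t ht)
  have hΨd := hΨ' t ht
  have hΨTd : ∀ i j, HasDerivAt (fun s : ℝ => (Ψ s)ᵀ i j) ((-((H t)ᵀ * Ψ t))ᵀ i j) t := by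
    intro i j; simpa [Matrix.transpose_apply] using hΨd j i
  have hA1 := matMulDeriv hΨd hϑ
  have hA2 := matMulDeriv hA1 hNd
  have hA3 := matMulDeriv hA2 hΨTd
  have hfun : (fun s : ℝ => ψh s i j)
      = fun s : ℝ => (Ψ s * ϑ * (1 + (2 : ℝ) • (V s * ϑ))⁻¹ * (Ψ s)ᵀ) i j := by
    funext s; rw [hψh s]
  have key : ((-((H t)ᵀ * Ψ t) * ϑ + Ψ t * 0) * N
        + Ψ t * ϑ * -(N * M' * N)) * (Ψ t)ᵀ
        + Ψ t * ϑ * N * (-((H t)ᵀ * Ψ t))ᵀ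
      = (2 : ℝ) • (ψh t * Sᵀ * S * ψh t) - (H t)ᵀ * ψh t - ψh t * H t := by
    rw [hψh t, ← hN, hM']
    simp only [Matrix.transpose_neg, Matrix.transpose_mul, Matrix.transpose_transpose,
      mul_zero, add_zero, add_mul, neg_mul, mul_neg, neg_neg, smul_mul_assoc, mul_smul_comm,
      mul_assoc, sub_eq_add_neg, two_smul, smul_neg, smul_add, mul_add]
    abel
  have hfin := hA3 i j
  rw [key] at hfin
  rw [hfun]
  exact hfin
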